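/- Assume ∑_{i≥1}|ω_i|² < ∞. Then for every multi-index ν the sum of |v_{η,ν}(ω)|² over all multi-indices η is finite; more precisely ∑_η |v_{η,ν}(ω)|² ≤ (1/ν!)·(∏_{i≥1} m_{ν_i,ν_i}(|ω_i|+|ω_{−i}|, |ω_i|+|ω_{−i}|))·exp(∑_{i≥1}|ω_i|²). Consequently V(ω)e_ν := ∑_η v_{η,ν}(ω)·e_η is a well-defined element of H for every ν, so the vertex operator V(ω) is defined on the dense linear span of the basis vectors. -/

import Mathlib

/-- A multi-index: a finitely supported function from the positive integers to `ℕ`. -/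
abbrev MultiIndex := ℕ+ →₀ ℕ

/-- The polynomial `m_{n,m}(x,y) = ∑_{j=0}^{min(n,m)} (n choose j)(m choose j) j! x^{n-j} y^{m-j}`. -/
def mPoly {R : Type*} [CommSemiring R] (n m : ℕ) (x y : R) : R :=
  ∑ j ∈ Finset.range (min n m + 1),
    (n.choose j : R) * (m.choose j : R) * (Nat.factorial j : R) * x ^ (n - j) * y ^ (m - j)

/-- `η! = ∏_{i≥1} η_i!`. -/
def miFact (η : MultiIndex) : ℕ := ∏ i ∈ η.support, Nat.factorial (η i)

/-- The matrix element `v_{η,ν}(ω) = (η!·ν!)^{-1/2} ∏_{i≥1} m_{η_i,ν_i}(ω_i, -ω_{-i})`;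
the product is finite since `m_{0,0} = 1`. -/
noncomputable def vElem (ωp ωm : ℕ+ → ℂ) (η ν : MultiIndex) : ℂ :=
  ((1 / Real.sqrt ((miFact η : ℝ) * (miFact ν : ℝ))) : ℝ) *
    ∏ i ∈ η.support ∪ ν.support, mPoly (η i) (ν i) (ωp i) (-ωm i)

open scoped ENNReal NNReal
open Finset

namespace VertexAux

noncomputable def EE (z : ℝ≥0∞) : ℝ≥0∞ := ∑' n : ℕ, z ^ n * (↑n.factorial)⁻¹

lemma cancel {a b c : ℝ≥0∞} (ha0 : a ≠ 0) (ha : a ≠ ⊤) (hb0 : b ≠ 0) (hb : b ≠ ⊤)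
    (h : a * b = c) : c⁻¹ * a = b⁻¹ := by
  subst h
  rw [ENNReal.mul_inv (Or.inl ha0) (Or.inl ha), mul_comm a⁻¹ b⁻¹, mul_assoc,
    ENNReal.inv_mul_cancel ha0 ha, mul_one]

lemma tsum_shift (f : ℕ → ℝ≥0∞) (k : ℕ) :
    ∑' n, f n = ∑ i ∈ range k, f i + ∑' n, f (n + k) :=
  ((ENNReal.summable (f := fun n => f (n + k))).hasSum.sum_range_add).tsum_eq

lemma fact_cast_ne_zero (n : ℕ) : ((n.factorial : ℝ≥0∞)) ≠ 0 := by
  exact_mod_cast n.factorial_pos.ne'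

lemma fact_cast_ne_top (n : ℕ) : ((n.factorial : ℝ≥0∞)) ≠ ⊤ := ENNReal.natCast_ne_top _

lemma choose_fact (t u : ℕ) :
    (((t + u).choose t : ℝ≥0∞)) * (↑(t + u).factorial)⁻¹
      = (↑t.factorial)⁻¹ * (↑u.factorial)⁻¹ := by
  have hn : ((t + u).choose t : ℝ≥0∞) * (↑t.factorial * ↑u.factorial) = ↑(t + u).factorial := by
    have := Nat.add_choose_mul_factorial_mul_factorial u t
    rw [Nat.add_comm u t] at this
    exact_mod_cast (by rw [← this]; ring : ((t+u).choose t * (t.factorial * u.factorial) : ℕ) = (t+u).factorial)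
  have h2 : (↑(t + u).factorial : ℝ≥0∞)⁻¹ * ((t + u).choose t : ℝ≥0∞) =
      (↑t.factorial * ↑u.factorial : ℝ≥0∞)⁻¹ := by
    refine cancel ?_ ?_ ?_ ?_ hn
    · exact_mod_cast Nat.choose_pos (Nat.le_add_right t u) |>.ne'
    · exact ENNReal.natCast_ne_top _
    · exact mul_ne_zero (fact_cast_ne_zero t) (fact_cast_ne_zero u)
    · exact ENNReal.mul_ne_top (fact_cast_ne_top t) (fact_cast_ne_top u)
  rw [mul_comm] at h2
  rw [h2, ENNReal.mul_inv (Or.inl (fact_cast_ne_zero t)) (Or.inl (fact_cast_ne_top t))]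

lemma lemT (t : ℕ) (h : ℕ → ℝ≥0∞) :
    ∑' s, (s.choose t : ℝ≥0∞) * (↑s.factorial)⁻¹ * h s
      = (↑t.factorial)⁻¹ * ∑' u, (↑u.factorial)⁻¹ * h (t + u) := by
  rw [tsum_shift (fun s => (s.choose t : ℝ≥0∞) * (↑s.factorial)⁻¹ * h s) t]
  have h0 : ∑ i ∈ range t, (i.choose t : ℝ≥0∞) * (↑i.factorial)⁻¹ * h i = 0 := by
    refine Finset.sum_eq_zero fun i hi => ?_
    rw [Nat.choose_eq_zero_of_lt (mem_range.mp hi)]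
    simp
  rw [h0, zero_add, ← ENNReal.tsum_mul_left]
  refine tsum_congr fun u => ?_
  rw [add_comm u t]
  calc ((t+u).choose t : ℝ≥0∞) * (↑(t+u).factorial)⁻¹ * h (t+u)
      = ((↑t.factorial)⁻¹ * (↑u.factorial)⁻¹) * h (t+u) := by rw [choose_fact]
    _ = (↑t.factorial)⁻¹ * ((↑u.factorial)⁻¹ * h (t+u)) := by ring

lemma lemA (j k : ℕ) (x : ℝ≥0∞) :
    ∑' n, (n.choose j : ℝ≥0∞) * (n.choose k : ℝ≥0∞) * x ^ (n - j) * x ^ (n - k)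
        * (↑n.factorial)⁻¹
      = EE (x ^ 2) * (↑j.factorial)⁻¹ * (↑k.factorial)⁻¹ * mPoly j k x x := by
  have step1 : ∀ n : ℕ, (n.choose j : ℝ≥0∞) * (n.choose k) * x ^ (n - j) * x ^ (n - k)
        * (↑n.factorial)⁻¹
      = (n.choose k : ℝ≥0∞) * (↑n.factorial)⁻¹
          * ((n.choose j : ℝ≥0∞) * x ^ (n - j) * x ^ (n - k)) := fun n => by ring
  rw [tsum_congr step1, lemT k (fun n => (n.choose j : ℝ≥0∞) * x ^ (n - j) * x ^ (n - k))]
  have step2 : ∀ u : ℕ, (↑u.factorial : ℝ≥0∞)⁻¹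
        * (((k+u).choose j : ℝ≥0∞) * x ^ (k+u-j) * x ^ (k+u-k))
      = ∑ r ∈ range (j+1), (k.choose r : ℝ≥0∞)
          * ((u.choose (j-r) : ℝ≥0∞) * (↑u.factorial)⁻¹ * (x ^ (k+u-j) * x ^ u)) := by
    intro u
    have hv : ((k+u).choose j : ℝ≥0∞)
        = ∑ r ∈ range (j+1), (k.choose r : ℝ≥0∞) * (u.choose (j-r) : ℝ≥0∞) := by
      have := Nat.add_choose_eq k u j
      rw [Finset.Nat.sum_antidiagonal_eq_sum_range_succ_mk] at this
      exact_mod_cast this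
    have hku : k + u - k = u := by omega
    rw [hku, hv, Finset.sum_mul, Finset.sum_mul, Finset.mul_sum]
    exact Finset.sum_congr rfl fun r _ => by ring
  rw [tsum_congr step2, Summable.tsum_finsetSum (fun r _ => ENNReal.summable)]
  have step3 : ∀ r ∈ range (j+1),
      ∑' u, (k.choose r : ℝ≥0∞)
          * ((u.choose (j-r) : ℝ≥0∞) * (↑u.factorial)⁻¹ * (x ^ (k+u-j) * x ^ u))
      = (k.choose r : ℝ≥0∞) * ((↑(j-r).factorial)⁻¹
          * (x ^ (k-r) * x ^ (j-r) * EE (x^2))) := by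
    intro r hr
    rw [ENNReal.tsum_mul_left, lemT (j-r) (fun s => x ^ (k+s-j) * x ^ s)]
    rcases le_or_gt r k with hrk | hrk
    · congr 1
      have hjr : r ≤ j := Nat.lt_succ_iff.mp (mem_range.mp hr)
      congr 1
      calc ∑' w, (↑w.factorial : ℝ≥0∞)⁻¹ * (x ^ (k+((j-r)+w)-j) * x ^ ((j-r)+w))
          = ∑' w, (x ^ (k-r) * x ^ (j-r)) * ((x^2) ^ w * (↑w.factorial)⁻¹) := by
            refine tsum_congr fun w => ?_
            have e1 : k + ((j-r)+w) - j = (k-r) + w := by omega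
            rw [e1, pow_add, pow_add]
            ring
        _ = x ^ (k-r) * x ^ (j-r) * EE (x^2) := by
            rw [ENNReal.tsum_mul_left]; rfl
    · have hk0 : k.choose r = 0 := Nat.choose_eq_zero_of_lt hrk
      simp [hk0]
  rw [Finset.sum_congr rfl step3]
  -- remaining: (k!)⁻¹ * ∑_r C(k,r)*((j-r)!)⁻¹*(x^{k-r} x^{j-r} EE) = EE*(j!)⁻¹*(k!)⁻¹*mPoly
  have key : ∑ r ∈ range (j+1), (k.choose r : ℝ≥0∞)
        * ((↑(j-r).factorial)⁻¹ * (x ^ (k-r) * x ^ (j-r) * EE (x^2)))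
      = EE (x^2) * (↑j.factorial)⁻¹ * mPoly j k x x := by
    have hext : mPoly j k x x = ∑ r ∈ range (j+1),
        (j.choose r : ℝ≥0∞) * (k.choose r : ℝ≥0∞) * (↑r.factorial)
          * x ^ (j-r) * x ^ (k-r) := by
      rw [mPoly]
      refine Finset.sum_subset (Finset.range_subset_range.mpr (by omega)) fun r hr1 hr2 => ?_
      have hrj : r < j + 1 := mem_range.mp hr1
      have : k < r := by
        have h1 := mem_range.mp hr1
        have h2 : ¬ r < min j k + 1 := fun h => hr2 (mem_range.mpr h)
        omega
      rw [Nat.choose_eq_zero_of_lt this]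
      simp
    rw [hext, Finset.mul_sum]
    refine Finset.sum_congr rfl fun r hr => ?_
    have hjr : r ≤ j := Nat.lt_succ_iff.mp (mem_range.mp hr)
    have hc : ((j.choose r : ℝ≥0∞) * ↑r.factorial) * (↑(j-r).factorial) = ↑j.factorial := by
      exact_mod_cast congrArg (Nat.cast : ℕ → ℝ≥0∞) (Nat.choose_mul_factorial_mul_factorial hjr)
    have hcc : (↑j.factorial : ℝ≥0∞)⁻¹ * ((j.choose r : ℝ≥0∞) * ↑r.factorial)
        = (↑(j-r).factorial)⁻¹ := by
      refine cancel ?_ ?_ (fact_cast_ne_zero _) (fact_cast_ne_top _) hc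
      · exact mul_ne_zero (by exact_mod_cast (Nat.choose_pos hjr).ne') (fact_cast_ne_zero _)
      · exact ENNReal.mul_ne_top (ENNReal.natCast_ne_top _) (fact_cast_ne_top _)
    calc (k.choose r : ℝ≥0∞) * ((↑(j-r).factorial)⁻¹ * (x ^ (k-r) * x ^ (j-r) * EE (x^2)))
        = ((↑j.factorial : ℝ≥0∞)⁻¹ * ((j.choose r : ℝ≥0∞) * ↑r.factorial))
            * ((k.choose r : ℝ≥0∞) * (x ^ (k-r) * x ^ (j-r) * EE (x^2))) := by rw [hcc]; ring
      _ = EE (x^2) * (↑j.factorial)⁻¹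
            * ((j.choose r : ℝ≥0∞) * (k.choose r : ℝ≥0∞) * (↑r.factorial)
                * x ^ (j-r) * x ^ (k-r)) := by ring
  rw [key]; ring
lemma lemQ (m r : ℕ) (hr : r ≤ m) (x y : ℝ≥0∞) :
    ∑ j ∈ range (m+1), (m.choose j : ℝ≥0∞) * (j.choose r : ℝ≥0∞) * x ^ (j-r) * y ^ (m-j)
      = (m.choose r : ℝ≥0∞) * (x+y) ^ (m-r) := by
  have hsub : Finset.Ico r (m+1) ⊆ range (m+1) := by
    intro a ha; rw [mem_range]; exact (Finset.mem_Ico.mp ha).2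
  rw [← Finset.sum_subset hsub (fun j hj1 hj2 => by
    have hjr : j < r := by
      have h1 := mem_range.mp hj1
      have h2 : ¬ (r ≤ j ∧ j < m + 1) := fun h => hj2 (Finset.mem_Ico.mpr h)
      omega
    rw [Nat.choose_eq_zero_of_lt hjr]; simp)]
  rw [Finset.sum_Ico_eq_sum_range]
  have hmr : m + 1 - r = (m - r) + 1 := by omega
  rw [hmr]
  rw [add_pow, Finset.mul_sum]
  refine Finset.sum_congr rfl fun a ha => ?_
  have ham : a ≤ m - r := Nat.lt_succ_iff.mp (mem_range.mp ha)
  have hc : (m.choose (r+a) : ℝ≥0∞) * ((r+a).choose r : ℝ≥0∞)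
      = (m.choose r : ℝ≥0∞) * ((m-r).choose a : ℝ≥0∞) := by
    have := Nat.choose_mul (n := m) (show r ≤ r + a by omega)
    have h2 : (r + a) - r = a := by omega
    rw [h2] at this
    exact_mod_cast this
  have e1 : r + a - r = a := by omega
  have e2 : m - (r + a) = (m - r) - a := by omega
  rw [e1, e2, ← mul_assoc, hc]
  ring

lemma lem1 (m : ℕ) (x y : ℝ≥0∞) :
    ∑' n, mPoly n m x y ^ 2 * (↑n.factorial)⁻¹ = EE (x ^ 2) * mPoly m m (x+y) (x+y) := by
  classical
  set a : ℕ → ℕ → ℝ≥0∞ := fun j n =>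
    (n.choose j : ℝ≥0∞) * (m.choose j : ℝ≥0∞) * (↑j.factorial) * x ^ (n-j) * y ^ (m-j) with ha
  have hexp : ∀ n, mPoly n m x y = ∑ j ∈ range (m+1), a j n := by
    intro n
    rw [mPoly]
    refine Finset.sum_subset (Finset.range_subset_range.mpr (by omega)) fun j hj1 hj2 => ?_
    have : n < j := by
      have h1 := mem_range.mp hj1
      have h2 : ¬ j < min n m + 1 := fun h => hj2 (mem_range.mpr h)
      omega
    rw [Nat.choose_eq_zero_of_lt this]; simp [ha]
  have hsq : ∀ n, mPoly n m x y ^ 2 * (↑n.factorial)⁻¹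
      = ∑ j ∈ range (m+1), ∑ k ∈ range (m+1), a j n * a k n * (↑n.factorial)⁻¹ := by
    intro n
    rw [hexp n, sq, Finset.sum_mul_sum]
    rw [Finset.sum_mul]
    exact Finset.sum_congr rfl fun j _ => by rw [Finset.sum_mul]
  rw [tsum_congr hsq, Summable.tsum_finsetSum (fun j _ => ENNReal.summable)]
  have hswap : ∀ j ∈ range (m+1), ∑' n, ∑ k ∈ range (m+1), a j n * a k n * (↑n.factorial)⁻¹
      = ∑ k ∈ range (m+1), ∑' n, a j n * a k n * (↑n.factorial)⁻¹ :=
    fun j _ => Summable.tsum_finsetSum (fun k _ => ENNReal.summable)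
  rw [Finset.sum_congr rfl hswap]
  have hinner : ∀ j ∈ range (m+1), ∀ k ∈ range (m+1),
      ∑' n, a j n * a k n * (↑n.factorial)⁻¹
      = (m.choose j : ℝ≥0∞) * (m.choose k : ℝ≥0∞) * y ^ (m-j) * y ^ (m-k)
          * mPoly j k x x * EE (x^2) := by
    intro j _ k _
    have rearr : ∀ n, a j n * a k n * (↑n.factorial)⁻¹
        = ((m.choose j : ℝ≥0∞) * (m.choose k : ℝ≥0∞) * (↑j.factorial) * (↑k.factorial)
            * y ^ (m-j) * y ^ (m-k))
          * ((n.choose j : ℝ≥0∞) * (n.choose k : ℝ≥0∞) * x ^ (n-j) * x ^ (n-k)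
            * (↑n.factorial)⁻¹) := fun n => by simp only [ha]; ring
    rw [tsum_congr rearr, ENNReal.tsum_mul_left, lemA]
    have hj : (↑j.factorial : ℝ≥0∞) * (↑j.factorial)⁻¹ = 1 :=
      ENNReal.mul_inv_cancel (fact_cast_ne_zero j) (fact_cast_ne_top j)
    have hk : (↑k.factorial : ℝ≥0∞) * (↑k.factorial)⁻¹ = 1 :=
      ENNReal.mul_inv_cancel (fact_cast_ne_zero k) (fact_cast_ne_top k)
    calc ((m.choose j : ℝ≥0∞) * (m.choose k : ℝ≥0∞) * (↑j.factorial) * (↑k.factorial)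
            * y ^ (m-j) * y ^ (m-k))
          * (EE (x^2) * (↑j.factorial)⁻¹ * (↑k.factorial)⁻¹ * mPoly j k x x)
        = ((↑j.factorial : ℝ≥0∞) * (↑j.factorial)⁻¹) * ((↑k.factorial : ℝ≥0∞) * (↑k.factorial)⁻¹)
          * ((m.choose j : ℝ≥0∞) * (m.choose k : ℝ≥0∞) * y ^ (m-j) * y ^ (m-k)
              * mPoly j k x x * EE (x^2)) := by ring
      _ = _ := by rw [hj, hk, one_mul, one_mul]
  rw [Finset.sum_congr rfl (fun j hj => Finset.sum_congr rfl (fun k hk => hinner j hj k hk))]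
  -- expand mPoly j k x x over range (m+1)
  have hmp : ∀ j ∈ range (m+1), ∀ k ∈ range (m+1), mPoly j k x x
      = ∑ r ∈ range (m+1),
          (j.choose r : ℝ≥0∞) * (k.choose r : ℝ≥0∞) * (↑r.factorial) * x ^ (j-r) * x ^ (k-r) := by
    intro j hj k hk
    have hjm := Nat.lt_succ_iff.mp (mem_range.mp hj)
    have hkm := Nat.lt_succ_iff.mp (mem_range.mp hk)
    rw [mPoly]
    refine Finset.sum_subset (Finset.range_subset_range.mpr (by omega)) fun r hr1 hr2 => ?_
    have h2 : ¬ r < min j k + 1 := fun h => hr2 (mem_range.mpr h)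
    have h1 := mem_range.mp hr1
    rcases le_or_gt j k with hjk | hjk
    · rw [Nat.choose_eq_zero_of_lt (show j < r by omega)]; simp
    · rw [Nat.choose_eq_zero_of_lt (show k < r by omega)]; simp
  have hterm : ∀ j ∈ range (m+1), ∀ k ∈ range (m+1),
      (m.choose j : ℝ≥0∞) * (m.choose k : ℝ≥0∞) * y ^ (m-j) * y ^ (m-k)
          * mPoly j k x x * EE (x^2)
      = ∑ r ∈ range (m+1), EE (x^2) * (↑r.factorial)
          * (((m.choose j : ℝ≥0∞) * (j.choose r : ℝ≥0∞) * x ^ (j-r) * y ^ (m-j))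
            * ((m.choose k : ℝ≥0∞) * (k.choose r : ℝ≥0∞) * x ^ (k-r) * y ^ (m-k))) := by
    intro j hj k hk
    rw [hmp j hj k hk, Finset.mul_sum, Finset.sum_mul]
    exact Finset.sum_congr rfl fun r _ => by ring
  rw [Finset.sum_congr rfl (fun j hj => Finset.sum_congr rfl (fun k hk => hterm j hj k hk))]
  rw [Finset.sum_congr rfl (fun j (_ : j ∈ range (m+1)) => Finset.sum_comm)]
  rw [Finset.sum_comm]
  set F : ℕ → ℕ → ℝ≥0∞ := fun j r =>
    (m.choose j : ℝ≥0∞) * (j.choose r : ℝ≥0∞) * x ^ (j-r) * y ^ (m-j) with hF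
  have step : ∀ r ∈ range (m+1),
      ∑ j ∈ range (m+1), ∑ k ∈ range (m+1),
        EE (x^2) * (↑r.factorial) * (F j r * F k r)
      = EE (x^2) * ((m.choose r : ℝ≥0∞) * (m.choose r : ℝ≥0∞) * (↑r.factorial)
          * (x+y)^(m-r) * (x+y)^(m-r)) := by
    intro r hr
    have hrm := Nat.lt_succ_iff.mp (mem_range.mp hr)
    have hQ : ∑ j ∈ range (m+1), F j r = (m.choose r : ℝ≥0∞) * (x+y) ^ (m-r) :=
      lemQ m r hrm x y
    calc ∑ j ∈ range (m+1), ∑ k ∈ range (m+1), EE (x^2) * (↑r.factorial) * (F j r * F k r)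
        = ∑ j ∈ range (m+1), (EE (x^2) * (↑r.factorial) * F j r)
            * ∑ k ∈ range (m+1), F k r := by
          refine Finset.sum_congr rfl fun j _ => ?_
          rw [Finset.mul_sum]
          exact Finset.sum_congr rfl fun k _ => by ring
      _ = (∑ j ∈ range (m+1), EE (x^2) * (↑r.factorial) * F j r)
            * ∑ k ∈ range (m+1), F k r := (Finset.sum_mul _ _ _).symm
      _ = (EE (x^2) * (↑r.factorial) * ∑ j ∈ range (m+1), F j r)
            * ∑ k ∈ range (m+1), F k r := by rw [← Finset.mul_sum]
      _ = _ := by rw [hQ]; ring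
  rw [Finset.sum_congr rfl step]
  have hmm2 : mPoly m m (x+y) (x+y) = ∑ r ∈ range (m+1),
      (m.choose r : ℝ≥0∞) * (m.choose r : ℝ≥0∞) * (↑r.factorial)
        * (x+y)^(m-r) * (x+y)^(m-r) := by
    rw [mPoly, Nat.min_self]
  rw [hmm2, Finset.mul_sum]
lemma master {ι : Type*} [DecidableEq ι] (S : Finset ι) (g : ι → ℕ → ℝ≥0∞)
    (hg0 : ∀ i ∉ S, g i 0 = 1) (B : ι → ℝ≥0∞) (hB : ∀ i, ∑' n, g i n ≤ B i)
    (C : ℝ≥0∞) (hC : ∀ T : Finset ι, S ⊆ T → ∏ i ∈ T, B i ≤ C) :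
    ∑' η : ι →₀ ℕ, ∏ i ∈ η.support ∪ S, g i (η i) ≤ C := by
  classical
  rw [ENNReal.tsum_eq_iSup_sum]
  refine iSup_le fun A => ?_
  set T : Finset ι := S ∪ A.sup Finsupp.support with hT
  have hST : S ⊆ T := Finset.subset_union_left
  have hprod : ∀ η ∈ A, ∏ i ∈ η.support ∪ S, g i (η i) = ∏ i ∈ T, g i (η i) := by
    intro η hη
    refine Finset.prod_subset ?_ ?_
    · exact Finset.union_subset
        ((Finset.le_sup hη).trans Finset.subset_union_right) hST
    · intro i hi hni
      have hiS : i ∉ S := fun h => hni (Finset.mem_union_right _ h)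
      have hiη : η i = 0 :=
        Finsupp.notMem_support_iff.mp (fun h => hni (Finset.mem_union_left _ h))
      rw [hiη, hg0 i hiS]
  rw [Finset.sum_congr rfl hprod]
  set box : ι → Finset ℕ := fun i => A.image (fun η => η i) with hbox
  set φ : (ι →₀ ℕ) → ((a : ι) → a ∈ T → ℕ) := fun η => fun i _ => η i with hφ
  have hsupp : ∀ η ∈ A, η.support ⊆ T :=
    fun η hη => (Finset.le_sup hη).trans Finset.subset_union_right
  have himg : ∑ η ∈ A, ∏ i ∈ T, g i (η i)
      = ∑ p ∈ A.image φ, ∏ x ∈ T.attach, g x.1 (p x.1 x.2) := by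
    rw [Finset.sum_image]
    · exact Finset.sum_congr rfl fun η _ => (Finset.prod_attach T fun i => g i (η i)).symm
    · intro η1 h1 η2 h2 heq
      ext i
      by_cases hi : i ∈ T
      · exact congrFun (congrFun heq i) hi
      · have e1 : η1 i = 0 := Finsupp.notMem_support_iff.mp fun hs => hi (hsupp η1 h1 hs)
        have e2 : η2 i = 0 := Finsupp.notMem_support_iff.mp fun hs => hi (hsupp η2 h2 hs)
        rw [e1, e2]
  rw [himg]
  have hsub : A.image φ ⊆ T.pi box := by
    intro p hp
    rcases Finset.mem_image.mp hp with ⟨η, hη, rfl⟩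
    rw [Finset.mem_pi]
    intro i hi
    exact Finset.mem_image.mpr ⟨η, hη, rfl⟩
  calc ∑ p ∈ A.image φ, ∏ x ∈ T.attach, g x.1 (p x.1 x.2)
      ≤ ∑ p ∈ T.pi box, ∏ x ∈ T.attach, g x.1 (p x.1 x.2) :=
        Finset.sum_le_sum_of_subset hsub
    _ = ∏ i ∈ T, ∑ n ∈ box i, g i n := (Finset.prod_sum T box g).symm
    _ ≤ ∏ i ∈ T, B i := Finset.prod_le_prod' fun i _ =>
        le_trans (ENNReal.sum_le_tsum (box i)) (hB i)
    _ ≤ C := hC T hST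

lemma EE_coe (t : ℝ≥0) : EE (t : ℝ≥0∞) = ENNReal.ofReal (Real.exp t) := by
  have hexp : Real.exp (t:ℝ) = ∑' n : ℕ, (t:ℝ)^n / n.factorial := by
    rw [Real.exp_eq_exp_ℝ, NormedSpace.exp_eq_tsum_div]
  rw [hexp, ENNReal.ofReal_tsum_of_nonneg (fun n => by positivity)
    (Real.summable_pow_div_factorial _)]
  refine tsum_congr fun n => ?_
  rw [div_eq_mul_inv, ENNReal.ofReal_mul (by positivity), ENNReal.ofReal_pow t.coe_nonneg,
    ENNReal.ofReal_coe_nnreal, ENNReal.ofReal_inv_of_pos (by exact_mod_cast n.factorial_pos),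
    ENNReal.ofReal_natCast]

lemma mPoly_hom {R S : Type*} [CommSemiring R] [CommSemiring S] (f : R →+* S)
    (n m : ℕ) (x y : R) : f (mPoly n m x y) = mPoly n m (f x) (f y) := by
  simp [mPoly, map_sum, map_mul, map_pow, map_natCast]

lemma mPoly_zero_zero {R : Type*} [CommSemiring R] (x y : R) : mPoly 0 0 x y = 1 := by
  simp [mPoly]

lemma mPoly_norm_le (n m : ℕ) (z w : ℂ) : ‖mPoly n m z w‖ ≤ mPoly n m ‖z‖ ‖w‖ := by
  refine (norm_sum_le _ _).trans ?_
  refine le_of_eq (Finset.sum_congr rfl fun j _ => ?_)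
  rw [norm_mul, norm_mul, norm_mul, norm_mul, norm_pow, norm_pow,
    Complex.norm_natCast, Complex.norm_natCast, Complex.norm_natCast]

lemma mPoly_nnnorm_le (n m : ℕ) (z w : ℂ) : ‖mPoly n m z w‖₊ ≤ mPoly n m ‖z‖₊ ‖w‖₊ := by
  rw [← NNReal.coe_le_coe, coe_nnnorm]
  have := mPoly_hom NNReal.toRealHom n m ‖z‖₊ ‖w‖₊
  simp only [NNReal.coe_toRealHom] at this  -- hope
  rw [this]  -- ?
  simpa [coe_nnnorm] using mPoly_norm_le n m z w

lemma prod_ofReal_exp {ι : Type*} (T : Finset ι) (a : ι → ℝ) :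
    ∏ i ∈ T, ENNReal.ofReal (Real.exp (a i))
      = ENNReal.ofReal (Real.exp (∑ i ∈ T, a i)) := by
  induction T using Finset.cons_induction with
  | empty => simp
  | cons i s hi ih =>
    rw [Finset.prod_cons, Finset.sum_cons, ih, ← ENNReal.ofReal_mul (Real.exp_nonneg _),
      ← Real.exp_add]

lemma miFact_pos (η : MultiIndex) : 0 < miFact η :=
  Finset.prod_pos fun i _ => (η i).factorial_pos

lemma miFact_coe_union (η ν : MultiIndex) :
    ((miFact η : ℝ≥0)) = ∏ i ∈ η.support ∪ ν.support, ((η i).factorial : ℝ≥0) := by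
  rw [miFact]
  push_cast
  refine Finset.prod_subset Finset.subset_union_left fun i _ hi => ?_
  rw [Finsupp.notMem_support_iff.mp hi]
  simp

lemma vElem_nnnorm_sq_le (ωp ωm : ℕ+ → ℂ) (η ν : MultiIndex) :
    ‖vElem ωp ωm η ν‖₊ ^ 2 ≤
      (∏ i ∈ η.support ∪ ν.support,
        (mPoly (η i) (ν i) ‖ωp i‖₊ ‖ωm i‖₊)^2 * (((η i).factorial : ℝ≥0))⁻¹)
        * ((miFact ν : ℝ≥0))⁻¹ := by
  have hab : (0:ℝ) < (miFact η : ℝ) * (miFact ν : ℝ) := by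
    have h1 := miFact_pos η; have h2 := miFact_pos ν
    positivity
  have hr : ‖vElem ωp ωm η ν‖₊
      ≤ ‖(1 / Real.sqrt ((miFact η : ℝ) * (miFact ν : ℝ)))‖₊
        * ∏ i ∈ η.support ∪ ν.support, mPoly (η i) (ν i) ‖ωp i‖₊ ‖ωm i‖₊ := by
    rw [vElem, nnnorm_mul, Complex.nnnorm_real]
    refine mul_le_mul_right ((Finset.nnnorm_prod_le _ _).trans ?_) _
    refine Finset.prod_le_prod' fun i _ => ?_
    simpa [nnnorm_neg] using mPoly_nnnorm_le (η i) (ν i) (ωp i) (-ωm i)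
  have hsq := pow_le_pow_left' hr 2
  refine hsq.trans (le_of_eq ?_)
  rw [mul_pow]
  have hrsq : ‖(1 / Real.sqrt ((miFact η : ℝ) * (miFact ν : ℝ)))‖₊ ^ 2
      = ((miFact η : ℝ≥0))⁻¹ * ((miFact ν : ℝ≥0))⁻¹ := by
    have : ((‖(1 / Real.sqrt ((miFact η : ℝ) * (miFact ν : ℝ)))‖₊ ^ 2 : ℝ≥0) : ℝ)
        = (((miFact η : ℝ≥0))⁻¹ * ((miFact ν : ℝ≥0))⁻¹ : ℝ≥0) := by
      push_cast [coe_nnnorm]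
      rw [Real.norm_eq_abs, ← abs_pow, div_pow, one_pow, Real.sq_sqrt hab.le,
        abs_of_nonneg (by positivity)]
      rw [one_div, mul_inv]
    exact_mod_cast this
  rw [hrsq, miFact_coe_union η ν, ← Finset.prod_inv_distrib, ← Finset.prod_pow,
    Finset.prod_mul_distrib]
  ring


end VertexAux

open VertexAux in
/-- If `∑_{i≥1} |ω_i|² < ∞`, then for every multi-index `ν` the column
`(v_{η,ν}(ω))_η` is square-summable, with the explicit bound
`∑_η |v_{η,ν}(ω)|² ≤ (1/ν!)·(∏_{i≥1} m_{ν_i,ν_i}(|ω_i|+|ω_{−i}|,|ω_i|+|ω_{−i}|))·exp(∑_{i≥1}|ω_i|²)`;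
consequently `V(ω)e_ν` is a well-defined element of `H = ℓ²` (i.e. the column is `Memℓp _ 2`),
so the vertex operator is defined on the dense span of the basis vectors. -/
theorem stmt1 (ωp ωm : ℕ+ → ℂ) (hω : Summable fun i : ℕ+ => ‖ωp i‖ ^ 2) (ν : MultiIndex) :
    Summable (fun η : MultiIndex => ‖vElem ωp ωm η ν‖ ^ 2) ∧
    (∑' η : MultiIndex, ‖vElem ωp ωm η ν‖ ^ 2 ≤
      (1 / (miFact ν : ℝ)) *
        (∏ i ∈ ν.support, mPoly (ν i) (ν i) (‖ωp i‖ + ‖ωm i‖) (‖ωp i‖ + ‖ωm i‖)) *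
        Real.exp (∑' i : ℕ+, ‖ωp i‖ ^ 2)) ∧
    Memℓp (fun η : MultiIndex => vElem ωp ωm η ν) 2 := by
  classical
  set S := ν.support with hS
  set X : ℕ+ → ℝ≥0 := fun i => ‖ωp i‖₊ with hX
  set Y : ℕ+ → ℝ≥0 := fun i => ‖ωm i‖₊ with hY
  set gN : ℕ+ → ℕ → ℝ≥0 :=
    fun i n => (mPoly n (ν i) (X i) (Y i))^2 * ((n.factorial : ℝ≥0))⁻¹ with hgN
  set g : ℕ+ → ℕ → ℝ≥0∞ := fun i n => ((gN i n : ℝ≥0) : ℝ≥0∞) with hg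
  set mP : ℕ+ → ℝ≥0 := fun i => mPoly (ν i) (ν i) (X i + Y i) (X i + Y i) with hmP
  set B : ℕ+ → ℝ≥0∞ :=
    fun i => ENNReal.ofReal (Real.exp (‖ωp i‖^2)) * ((mP i : ℝ≥0) : ℝ≥0∞) with hB
  set C0 : ℝ≥0∞ := ((∏ i ∈ S, mP i : ℝ≥0) : ℝ≥0∞)
    * ENNReal.ofReal (Real.exp (∑' i : ℕ+, ‖ωp i‖^2)) with hC0
  -- basic facts
  have hg0 : ∀ i ∉ S, g i 0 = 1 := by
    intro i hi
    have hν : ν i = 0 := Finsupp.notMem_support_iff.mp hi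
    simp [hg, hgN, hν, mPoly_zero_zero]
  have hfactne : ∀ n : ℕ, ((n.factorial : ℝ≥0)) ≠ 0 := fun n => by
    exact_mod_cast n.factorial_pos.ne'
  have hBsum : ∀ i, ∑' n, g i n ≤ B i := by
    intro i
    have hcast : ∀ n : ℕ, g i n
        = mPoly n (ν i) ((X i : ℝ≥0) : ℝ≥0∞) ((Y i : ℝ≥0) : ℝ≥0∞) ^ 2
            * ((n.factorial : ℝ≥0∞))⁻¹ := by
      intro n
      have h1 : ((mPoly n (ν i) (X i) (Y i) : ℝ≥0) : ℝ≥0∞)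
          = mPoly n (ν i) ((X i : ℝ≥0) : ℝ≥0∞) ((Y i : ℝ≥0) : ℝ≥0∞) := by
        simpa using mPoly_hom ENNReal.ofNNRealHom n (ν i) (X i) (Y i)
      simp only [hg, hgN, ENNReal.coe_mul, ENNReal.coe_pow, h1,
        ENNReal.coe_inv (hfactne n), ENNReal.coe_natCast]
    rw [tsum_congr hcast, lem1]
    have h2 : EE (((X i : ℝ≥0) : ℝ≥0∞) ^ 2) = ENNReal.ofReal (Real.exp (‖ωp i‖^2)) := by
      rw [← ENNReal.coe_pow, EE_coe]
      simp [hX]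
    have h3 : mPoly (ν i) (ν i) (((X i : ℝ≥0) : ℝ≥0∞) + ((Y i : ℝ≥0) : ℝ≥0∞))
          (((X i : ℝ≥0) : ℝ≥0∞) + ((Y i : ℝ≥0) : ℝ≥0∞)) = ((mP i : ℝ≥0) : ℝ≥0∞) := by
      rw [← ENNReal.coe_add, hmP]
      exact (mPoly_hom ENNReal.ofNNRealHom (ν i) (ν i) (X i + Y i) (X i + Y i)).symm
    rw [h2, h3, hB]
  have hC : ∀ T : Finset ℕ+, S ⊆ T → ∏ i ∈ T, B i ≤ C0 := by
    intro T hST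
    rw [hB, Finset.prod_mul_distrib, prod_ofReal_exp]
    have h2 : (∏ i ∈ T, ((mP i : ℝ≥0) : ℝ≥0∞)) = ((∏ i ∈ S, mP i : ℝ≥0) : ℝ≥0∞) := by
      rw [← ENNReal.coe_finset_prod]
      congr 1
      refine (Finset.prod_subset hST fun i _ hi => ?_).symm
      have hν : ν i = 0 := Finsupp.notMem_support_iff.mp hi
      simp [hmP, hν, mPoly_zero_zero]
    rw [h2, hC0, mul_comm]
    refine mul_le_mul_right (ENNReal.ofReal_le_ofReal (Real.exp_le_exp.mpr ?_)) _
    exact Summable.sum_le_tsum T (fun i _ => sq_nonneg _) hω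
  have hmaster : ∑' η : MultiIndex, ∏ i ∈ η.support ∪ S, g i (η i) ≤ C0 :=
    master S g hg0 B hBsum C0 hC
  -- pointwise bound
  have hνne : ((miFact ν : ℝ≥0)) ≠ 0 := by exact_mod_cast (miFact_pos ν).ne'
  have hpoint : ∀ η : MultiIndex, ((‖vElem ωp ωm η ν‖₊ ^ 2 : ℝ≥0) : ℝ≥0∞)
      ≤ (∏ i ∈ η.support ∪ S, g i (η i)) * (((miFact ν : ℝ≥0))⁻¹ : ℝ≥0) := by
    intro η
    have h := vElem_nnnorm_sq_le ωp ωm η ν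
    have h' : (‖vElem ωp ωm η ν‖₊ ^ 2 : ℝ≥0)
        ≤ (∏ i ∈ η.support ∪ S, gN i (η i)) * ((miFact ν : ℝ≥0))⁻¹ := h
    calc ((‖vElem ωp ωm η ν‖₊ ^ 2 : ℝ≥0) : ℝ≥0∞)
        ≤ (((∏ i ∈ η.support ∪ S, gN i (η i)) * ((miFact ν : ℝ≥0))⁻¹ : ℝ≥0) : ℝ≥0∞) :=
          ENNReal.coe_le_coe.mpr h'
      _ = (∏ i ∈ η.support ∪ S, g i (η i)) * (((miFact ν : ℝ≥0))⁻¹ : ℝ≥0) := by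
          rw [ENNReal.coe_mul, ENNReal.coe_finset_prod]
  set Cfull : ℝ≥0∞ := C0 * ((((miFact ν : ℝ≥0))⁻¹ : ℝ≥0) : ℝ≥0∞) with hCfull
  have hSig : ∑' η : MultiIndex, ((‖vElem ωp ωm η ν‖₊ ^ 2 : ℝ≥0) : ℝ≥0∞) ≤ Cfull := by
    refine (ENNReal.tsum_le_tsum hpoint).trans ?_
    rw [ENNReal.tsum_mul_right]
    exact mul_le_mul_left hmaster _
  have hCfull_ne : Cfull ≠ ⊤ := by
    rw [hCfull, hC0]
    exact ENNReal.mul_ne_top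
      (ENNReal.mul_ne_top ENNReal.coe_ne_top ENNReal.ofReal_ne_top) ENNReal.coe_ne_top
  have h_ne : ∑' η : MultiIndex, ((‖vElem ωp ωm η ν‖₊ ^ 2 : ℝ≥0) : ℝ≥0∞) ≠ ⊤ :=
    ne_top_of_le_ne_top hCfull_ne hSig
  have hsumN : Summable (fun η : MultiIndex => (‖vElem ωp ωm η ν‖₊ ^ 2 : ℝ≥0)) :=
    ENNReal.tsum_coe_ne_top_iff_summable.mp h_ne
  have hcoe : ∀ η : MultiIndex, ((‖vElem ωp ωm η ν‖₊ ^ 2 : ℝ≥0) : ℝ) = ‖vElem ωp ωm η ν‖ ^ 2 := by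
    intro η; push_cast [coe_nnnorm]; ring
  have hsumR : Summable (fun η : MultiIndex => ‖vElem ωp ωm η ν‖ ^ 2) :=
    (NNReal.summable_coe.mpr hsumN).congr hcoe
  refine ⟨hsumR, ?_, ?_⟩
  · -- the bound
    have htsum_eq : ∑' η : MultiIndex, ‖vElem ωp ωm η ν‖ ^ 2
        = ((∑' η : MultiIndex, (‖vElem ωp ωm η ν‖₊ ^ 2 : ℝ≥0) : ℝ≥0) : ℝ) := by
      rw [NNReal.coe_tsum]
      exact (tsum_congr hcoe).symm
    have hle : ((∑' η : MultiIndex, (‖vElem ωp ωm η ν‖₊ ^ 2 : ℝ≥0) : ℝ≥0) : ℝ)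
        ≤ Cfull.toReal := by
      have h1 : ((∑' η : MultiIndex, (‖vElem ωp ωm η ν‖₊ ^ 2 : ℝ≥0) : ℝ≥0) : ℝ≥0∞)
          ≤ Cfull := by rw [ENNReal.coe_tsum hsumN]; exact hSig
      simpa using ENNReal.toReal_mono hCfull_ne h1
    have hCtoReal : Cfull.toReal
        = (1 / (miFact ν : ℝ)) *
          (∏ i ∈ ν.support, mPoly (ν i) (ν i) (‖ωp i‖ + ‖ωm i‖) (‖ωp i‖ + ‖ωm i‖)) *
          Real.exp (∑' i : ℕ+, ‖ωp i‖ ^ 2) := by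
      rw [hCfull, hC0, ENNReal.toReal_mul, ENNReal.toReal_mul, ENNReal.coe_toReal,
        ENNReal.coe_toReal, ENNReal.toReal_ofReal (Real.exp_nonneg _)]
      have hprod : ((∏ i ∈ S, mP i : ℝ≥0) : ℝ)
          = ∏ i ∈ ν.support, mPoly (ν i) (ν i) (‖ωp i‖ + ‖ωm i‖) (‖ωp i‖ + ‖ωm i‖) := by
        push_cast
        refine Finset.prod_congr rfl fun i _ => ?_
        have := mPoly_hom NNReal.toRealHom (ν i) (ν i) (X i + Y i) (X i + Y i)
        simp only [NNReal.coe_toRealHom] at this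
        rw [hmP, this]
        push_cast [hX, hY, coe_nnnorm]
        rfl
      rw [hprod]
      push_cast
      ring
    rw [htsum_eq, ← hCtoReal]
    exact hle
  · -- Memℓp
    refine memℓp_gen ?_
    have h2 : (2 : ℝ≥0∞).toReal = (2 : ℝ) := by norm_num
    refine hsumR.congr fun η => ?_
    simp only [h2]
    rw [show ((2:ℝ)) = ((2:ℕ) : ℝ) by norm_num, Real.rpow_natCast]
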